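/- arXiv:2106.12465 — 2 statements merged into one kernel-verified Lean document; each statement's English description precedes it below -/
import Mathlib

section
/- Let k ≥ 2 and let C be an [n,k]_{q^m/q} one-weight rank-metric code (all nonzero codewords have the same rank d). Then the effective length dim_{F_q}(σ^rk(C)) of C equals km and d = m. -/
open Module Submodule

/-- The rank support of a vector `v ∈ L^n` over the subfield `K`: the `K`-span of the
rows of the expansion matrix, i.e. the space of all `(φ (v 1), ..., φ (v n))` for
`K`-linear functionals `φ : L → K`. -/
noncomputable def rkSupport (K : Type) {L : Type} [Field K] [Field L] [Algebra K L]
    {n : ℕ} (v : Fin n → L) : Submodule K (Fin n → K) :=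
  LinearMap.range (LinearMap.pi (fun i => LinearMap.applyₗ (v i) :
    Fin n → Module.Dual K L →ₗ[K] K))



section Aux

variable (K : Type) {L : Type} [Field K] [Field L] [Algebra K L] {n : ℕ}

/-- `x ↦ ∑ i, x i • c i`. -/
noncomputable def gMap (c : Fin n → L) : (Fin n → K) →ₗ[K] L :=
  Fintype.linearCombination K c

lemma gMap_apply (c : Fin n → L) (x : Fin n → K) : gMap K c x = ∑ i, x i • c i := rfl

/-- The standard map `Dual K (Kⁿ) → Kⁿ`. -/
noncomputable def piDual (n : ℕ) : Module.Dual K (Fin n → K) →ₗ[K] (Fin n → K) :=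
  LinearMap.pi fun i => LinearMap.applyₗ (Pi.single i (1:K))

lemma piDual_injective : Function.Injective (piDual K n) := by
  intro ψ χ h
  ext x
  have := congrFun h x
  simp only [piDual, LinearMap.pi_apply] at this
  simpa using this

lemma finrank_map_piDual (S : Submodule K (Module.Dual K (Fin n → K))) :
    finrank K (Submodule.map (piDual K n) S) = finrank K S :=
  (LinearEquiv.finrank_eq (Submodule.equivMapOfInjective _ (piDual_injective K) S)).symm

lemma rkSupport_eq_map (c : Fin n → L) :
    rkSupport K c = Submodule.map (piDual K n) (LinearMap.range (gMap K c).dualMap) := by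
  rw [← LinearMap.range_comp]
  congr 1
  funext i
  rw [gMap_apply]
  simp [Pi.single_apply, ite_smul]

lemma finrank_rkSupport [FiniteDimensional K L] (c : Fin n → L) :
    finrank K (rkSupport K c) = finrank K (LinearMap.range (gMap K c)) := by
  rw [rkSupport_eq_map, finrank_map_piDual,
    LinearMap.finrank_range_dualMap_eq_finrank_range]

end Aux

section WithC

variable (K : Type) {L : Type} [Field K] [Field L] [Algebra K L] {n : ℕ}
variable (C : Submodule L (Fin n → L))

/-- The map `Kⁿ → Dual L C` sending `x` to `v ↦ ∑ i, x i • v i`. -/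
noncomputable def eMap : (Fin n → K) →ₗ[K] (↥C →ₗ[L] L) :=
  Fintype.linearCombination K (fun i => (LinearMap.proj i).comp C.subtype)

/-- Evaluation at `v`, as a `K`-linear map. -/
def evalAtK (v : ↥C) : (↥C →ₗ[L] L) →ₗ[K] L where
  toFun u := u v
  map_add' := by simp
  map_smul' := by simp

lemma evalAtK_comp_eMap (v : ↥C) :
    (evalAtK K C v).comp (eMap K C) = gMap K (v : Fin n → L) := by
  apply LinearMap.ext; intro x
  simp [evalAtK, eMap, gMap, Fintype.linearCombination]

lemma sup_rkSupport_eq [Fintype K] [Fintype L] :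
    (⨆ v ∈ C, rkSupport K v) =
      Submodule.map (piDual K n) (LinearMap.range (eMap K C).dualMap) := by
  haveI : Finite (↥C →ₗ[L] L) :=
    Finite.of_injective (fun f => (f : ↥C → L)) DFunLike.coe_injective
  have hW : (⨆ v : ↥C, LinearMap.range ((evalAtK K C v).dualMap)) =
      (⊤ : Submodule K (Module.Dual K (↥C →ₗ[L] L))) := by
    set W := ⨆ v : ↥C, LinearMap.range ((evalAtK K C v).dualMap) with hWdef
    have hco : W.dualCoannihilator = ⊥ := by
      rw [eq_bot_iff]
      intro u hu
      rw [Submodule.mem_dualCoannihilator] at hu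
      have hv : ∀ v : ↥C, u v = 0 := by
        intro v
        refine (Module.forall_dual_apply_eq_zero_iff K (u v)).mp fun φ => ?_
        have := hu ((evalAtK K C v).dualMap φ)
          ((le_iSup (fun v : ↥C => LinearMap.range ((evalAtK K C v).dualMap)) v)
            (LinearMap.mem_range_self _ φ))
        simpa [evalAtK] using this
      simpa using LinearMap.ext hv
    have hfr := Subspace.finrank_add_finrank_dualCoannihilator_eq W
    rw [hco, finrank_bot, add_zero] at hfr
    exact Submodule.eq_top_of_finrank_eq (by rw [hfr, Subspace.dual_finrank_eq])
  have hsub : (⨆ v ∈ C, rkSupport K v) = ⨆ v : ↥C, rkSupport K (v : Fin n → L) := by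
    rw [iSup_subtype]
  have hrange : ∀ v : ↥C,
      LinearMap.range ((gMap K (v : Fin n → L)).dualMap) =
        Submodule.map (eMap K C).dualMap
          (LinearMap.range ((evalAtK K C v).dualMap)) := by
    intro v
    rw [← LinearMap.range_comp, LinearMap.dualMap_comp_dualMap, evalAtK_comp_eMap]
  calc (⨆ v ∈ C, rkSupport K v)
      = ⨆ v : ↥C, rkSupport K (v : Fin n → L) := hsub
    _ = ⨆ v : ↥C, Submodule.map (piDual K n)
          (LinearMap.range ((gMap K (v : Fin n → L)).dualMap)) := by
        simp_rw [rkSupport_eq_map]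
    _ = Submodule.map (piDual K n)
          (⨆ v : ↥C, LinearMap.range ((gMap K (v : Fin n → L)).dualMap)) := by
        rw [Submodule.map_iSup]
    _ = Submodule.map (piDual K n) (LinearMap.range (eMap K C).dualMap) := by
        congr 1
        simp_rw [hrange, ← Submodule.map_iSup, hW, Submodule.map_top]

lemma finrank_sup_rkSupport [Fintype K] [Fintype L] :
    finrank K ↥(⨆ v ∈ C, rkSupport K v) = finrank K (LinearMap.range (eMap K C)) := by
  haveI : Finite (↥C →ₗ[L] L) :=
    Finite.of_injective (fun f => (f : ↥C → L)) DFunLike.coe_injective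
  rw [sup_rkSupport_eq, finrank_map_piDual,
    LinearMap.finrank_range_dualMap_eq_finrank_range]

end WithC


lemma double_count {α β : Type} [Fintype α] [Fintype β] (R : α → β → Prop) :
    ∑ a : α, Nat.card {b : β // R a b} = ∑ b : β, Nat.card {a : α // R a b} := by
  classical
  have hL : ∀ a : α, Nat.card {b : β // R a b} = (Finset.univ.filter (R a)).card := by
    intro a
    rw [Nat.card_eq_fintype_card, Fintype.card_subtype]
  have hR : ∀ b : β, Nat.card {a : α // R a b} = (Finset.univ.filter (R · b)).card := by
    intro b
    rw [Nat.card_eq_fintype_card, Fintype.card_subtype]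
  simp_rw [hL, hR, Finset.card_filter]
  exact Finset.sum_comm

lemma card_module (F V : Type) [Field F] [Fintype F] [AddCommGroup V] [Module F V]
    [Finite V] : Nat.card V = Fintype.card F ^ finrank F V := by
  letI : Fintype V := Fintype.ofFinite V
  rw [Nat.card_eq_fintype_card, card_eq_pow_finrank (K := F) (V := V)]

lemma sum_split_zero {V : Type} [Fintype V] [AddCommMonoid V] [DecidableEq V]
    (f : V → ℕ) (A B : ℕ) (h0 : f 0 = A) (h1 : ∀ v : V, v ≠ 0 → f v = B) :
    ∑ v : V, f v = A + (Fintype.card V - 1) * B := by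
  classical
  rw [← Finset.sum_erase_add _ _ (Finset.mem_univ (0 : V))]
  rw [Finset.sum_congr rfl (fun v hv => h1 v (Finset.ne_of_mem_erase hv)), Finset.sum_const,
    h0, Finset.card_erase_of_mem (Finset.mem_univ _), Finset.card_univ, smul_eq_mul, add_comm]


lemma arith_core (q m k d a b : ℕ) (hq : 2 ≤ q) (hm : 1 ≤ m) (hk : 2 ≤ k) (hd : 1 ≤ d)
    (hdm : d ≤ m) (hab : a = b + d)
    (heq : q^(m*k) + (q^a - 1) * q^(m*(k-1)) = q^a + (q^(m*k) - 1) * q^b) :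
    a = m*k ∧ d = m := by
  have hk1 : k - 1 + 1 = k := by omega
  have hmk : m * k = m * (k-1) + m := by
    conv_lhs => rw [← hk1]
    ring
  have hmk1 : 0 < m * (k - 1) := Nat.mul_pos (by omega) (by omega)
  have hQ : (2:ℤ) ≤ (q:ℤ) := by exact_mod_cast hq
  have hone : (1:ℤ) ≤ (q:ℤ) := by linarith
  have hEQ : (q:ℤ)^(m*k) + ((q:ℤ)^a - 1) * (q:ℤ)^(m*(k-1))
      = (q:ℤ)^a + ((q:ℤ)^(m*k) - 1) * (q:ℤ)^b := by
    have h1 : (1:ℕ) ≤ q ^ a := Nat.one_le_pow a q (by omega)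
    have h2 : (1:ℕ) ≤ q ^ (m*k) := Nat.one_le_pow (m*k) q (by omega)
    zify [h1, h2] at heq
    exact_mod_cast heq
  obtain ⟨R, hRdef⟩ : ∃ x:ℤ, x = (q:ℤ)^(m*(k-1)) := ⟨_, rfl⟩
  obtain ⟨M, hMdef⟩ : ∃ x:ℤ, x = (q:ℤ)^m := ⟨_, rfl⟩
  obtain ⟨B, hBdef⟩ : ∃ x:ℤ, x = (q:ℤ)^b := ⟨_, rfl⟩
  obtain ⟨D, hDdef⟩ : ∃ x:ℤ, x = (q:ℤ)^d := ⟨_, rfl⟩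
  have hM : (2:ℤ) ≤ M := hMdef ▸ le_trans hQ (le_self_pow₀ hone (by omega))
  have hR : (2:ℤ) ≤ R := hRdef ▸ le_trans hQ (le_self_pow₀ hone (by omega))
  have hB : (1:ℤ) ≤ B := hBdef ▸ one_le_pow₀ hone
  have hD : (2:ℤ) ≤ D := hDdef ▸ le_trans hQ (le_self_pow₀ hone (by omega))
  have hQmk : (q:ℤ)^(m*k) = R * M := by rw [hRdef, hMdef, hmk, pow_add]
  have hQa : (q:ℤ)^a = B * D := by rw [hBdef, hDdef, hab, pow_add]
  rw [hQmk, hQa, ← hRdef, ← hBdef] at hEQ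
  -- b ≥ 1
  have hb1 : 1 ≤ b := by
    by_contra hb0
    have hb0' : b = 0 := by omega
    have hB1 : B = 1 := by rw [hBdef, hb0', pow_zero]
    rw [hB1] at hEQ
    have id0 : (D-1)*(R-1) = 0 := by linear_combination hEQ
    rcases mul_eq_zero.mp id0 with h | h
    · linarith
    · linarith
  have hB2 : (2:ℤ) ≤ B := hBdef ▸ le_trans hQ (le_self_pow₀ hone (by omega))
  -- d = m
  have hdm' : d = m := by
    by_contra hne
    have hdm1 : d + 1 ≤ m := by omega
    have hMD : 2 * D ≤ M := by
      have h1 : (q:ℤ) * D ≤ (q:ℤ)^m := by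
        rw [hDdef, ← pow_succ']
        exact pow_le_pow_right₀ hone hdm1
      rw [hMdef]
      nlinarith [hD, hQ, h1]
    have key : R*B*(M-D) = R*(M-1) - B*(D-1) := by linear_combination -hEQ
    have e1 : 0 ≤ (B-2)*(R*(M-D)) :=
      mul_nonneg (by linarith) (mul_nonneg (by linarith) (by linarith))
    have e2 : 0 ≤ R*(M-2*D) := mul_nonneg (by linarith) (by linarith)
    have e3 : 0 ≤ B*(D-1) := mul_nonneg (by linarith) (by linarith)
    have id1 : R*B*(M-D) - 2*(R*(M-D)) = (B-2)*(R*(M-D)) := by ring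
    have id2 : 2*(R*(M-D)) = R*M + R*(M-2*D) := by ring
    have id3 : R*(M-1) = R*M - R := by ring
    linarith [key, e1, e2, e3, id1, id2, id3, hR]
  have hDM : D = M := by rw [hDdef, hMdef, hdm']
  rw [hDM] at hEQ
  have hRB : (R - B) * (M - 1) = 0 := by linear_combination hEQ
  have hRB' : R = B := by
    rcases mul_eq_zero.mp hRB with h | h
    · linarith
    · linarith
  have hbe : b = m * (k - 1) := by
    have h : (q : ℤ)^b = (q:ℤ)^(m*(k-1)) := by rw [← hBdef, ← hRdef, hRB']
    have hnat : q^b = q^(m*(k-1)) := by exact_mod_cast h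
    exact Nat.pow_right_injective hq hnat
  refine ⟨?_, hdm'⟩
  rw [hab, hbe, hdm', ← hmk]


theorem stmt_9 {K L : Type} [Field K] [Field L] [Algebra K L] [Fintype K] [Fintype L]
    {n k m d : ℕ} (hm : Module.finrank K L = m)
    (C : Submodule L (Fin n → L)) (hk : Module.finrank L C = k) (hk2 : 2 ≤ k)
    (hone : ∀ c ∈ C, c ≠ 0 → Module.finrank K (rkSupport K c) = d) :
    Module.finrank K ↥(⨆ v ∈ C, rkSupport K v) = k * m ∧ d = m := by
  classical
  haveI : Finite (↥C →ₗ[L] L) :=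
    Finite.of_injective (fun f => (f : ↥C → L)) DFunLike.coe_injective
  set q := Fintype.card K with hqdef
  have hq2 : 2 ≤ q := Fintype.one_lt_card
  have hm1 : 1 ≤ m := by rw [← hm]; exact Module.finrank_pos
  have hcardL : Fintype.card L = q ^ m := by
    rw [card_eq_pow_finrank (K := K) (V := L), hm]
  set V := LinearMap.range (eMap K C) with hVdef
  set a := finrank K ↥V with hadef
  -- a nonzero codeword
  have hCne : C ≠ ⊥ := by
    intro h
    rw [h, finrank_bot] at hk
    omega
  obtain ⟨c0, hc0C, hc0ne⟩ := Submodule.exists_mem_ne_zero_of_ne_bot hCne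
  -- d ≥ 1
  have hd1 : 1 ≤ d := by
    by_contra h0'
    have h0 : d = 0 := by omega
    have hfr := hone c0 hc0C hc0ne
    rw [h0] at hfr
    have hbot : rkSupport K c0 = ⊥ := Submodule.finrank_eq_zero.mp hfr
    apply hc0ne
    funext i
    show c0 i = 0
    have hall : ∀ φ : Module.Dual K L, φ (c0 i) = 0 := by
      intro φ
      have hmem : (fun j => φ (c0 j)) ∈ rkSupport K c0 := ⟨φ, by funext j; simp⟩
      rw [hbot, Submodule.mem_bot] at hmem
      exact congrFun hmem i
    exact (Module.forall_dual_apply_eq_zero_iff K _).mp hall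
  -- d ≤ m
  have hdm : d ≤ m := by
    have hfr := hone c0 hc0C hc0ne
    rw [← hfr, ← hm]
    calc finrank K ↥(rkSupport K c0) ≤ finrank K (Module.Dual K L) :=
          LinearMap.finrank_range_le _
      _ = finrank K L := Subspace.dual_finrank_eq
  -- rank of each nonzero codeword through gMap
  have hdv : ∀ v : ↥C, v ≠ 0 →
      finrank K ↥(LinearMap.range (gMap K (v : Fin n → L))) = d := by
    intro v hv
    rw [← finrank_rkSupport]
    exact hone (v : Fin n → L) v.2 (fun h => hv (Submodule.coe_eq_zero.mp h))
  have hrangecomp : ∀ v : ↥C,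
      LinearMap.range ((evalAtK K C v).comp (Submodule.subtype V)) =
        LinearMap.range (gMap K (v : Fin n → L)) := by
    intro v
    rw [LinearMap.range_comp, Submodule.range_subtype, hVdef, ← LinearMap.range_comp,
      evalAtK_comp_eMap]
  have hker : ∀ v : ↥C, v ≠ 0 →
      finrank K ↥(LinearMap.ker ((evalAtK K C v).comp (Submodule.subtype V))) + d = a := by
    intro v hv
    letI : AddCommGroup (↥C →ₗ[L] L) := LinearMap.addCommGroup
    have h := LinearMap.finrank_range_add_finrank_ker
      ((evalAtK K C v).comp (Submodule.subtype V) : ↥V →ₗ[K] L)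
    rw [hrangecomp v, hdv v hv] at h
    omega
  have hda : d ≤ a := by
    have h := hker ⟨c0, hc0C⟩ (fun h => hc0ne (by simpa using congrArg Subtype.val h))
    omega
  set b := a - d with hbdef
  have hab : a = b + d := by omega
  -- cardinalities
  haveI : Fintype ↥C := Fintype.ofFinite _
  haveI : Fintype ↥V := Fintype.ofFinite _
  have hcardC : Nat.card ↥C = q ^ (m * k) := by
    rw [card_module L ↥C, hcardL, hk, ← pow_mul]
  have hcardV : Nat.card ↥V = q ^ a := card_module K ↥V
  -- counts
  have hcount_v : ∀ v : ↥C, v ≠ 0 →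
      Nat.card {u : ↥V // (u : ↥C →ₗ[L] L) v = 0} = q ^ b := by
    intro v hv
    letI : AddCommGroup (↥C →ₗ[L] L) := LinearMap.addCommGroup
    have hEquiv : {u : ↥V // ((u : ↥C →ₗ[L] L)) v = 0} ≃
        ↥(LinearMap.ker ((evalAtK K C v).comp (Submodule.subtype V))) :=
      Equiv.subtypeEquivRight (fun u => by
        simp [LinearMap.mem_ker, evalAtK])
    rw [Nat.card_congr hEquiv, card_module K _]
    congr 1
    have h := hker v hv
    omega
  have hcount_v0 : Nat.card {u : ↥V // (u : ↥C →ₗ[L] L) (0 : ↥C) = 0} = q ^ a := by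
    rw [← hcardV]
    exact Nat.card_congr (Equiv.subtypeUnivEquiv (fun u => by simp))
  have hcount_u : ∀ u : ↥C →ₗ[L] L, u ≠ 0 →
      Nat.card {v : ↥C // u v = 0} = q ^ (m * (k - 1)) := by
    intro u hu
    have hEquiv : {v : ↥C // u v = 0} ≃ ↥(LinearMap.ker u) :=
      Equiv.subtypeEquivRight (fun v => by simp [LinearMap.mem_ker])
    have hrt : LinearMap.range u = ⊤ := by
      rcases Ideal.eq_bot_or_top (LinearMap.range u) with h | h
      · exact absurd (LinearMap.range_eq_bot.mp h) hu
      · exact h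
    have h1 := LinearMap.finrank_range_add_finrank_ker u
    rw [hrt, finrank_top, Module.finrank_self, hk] at h1
    have h2 : finrank L ↥(LinearMap.ker u) = k - 1 := by omega
    rw [Nat.card_congr hEquiv, card_module L _, hcardL, ← pow_mul, h2]
  have hcount_u0 : Nat.card {v : ↥C // (0 : ↥C →ₗ[L] L) v = 0} = q ^ (m * k) := by
    rw [← hcardC]
    exact Nat.card_congr (Equiv.subtypeUnivEquiv (fun v => by simp))
  -- double counting
  have hdc := double_count (fun (u : ↥V) (v : ↥C) => (u : ↥C →ₗ[L] L) v = 0)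
  have hLHS : ∑ u : ↥V, Nat.card {v : ↥C // (u : ↥C →ₗ[L] L) v = 0}
      = q ^ (m*k) + (q ^ a - 1) * q ^ (m*(k-1)) := by
    rw [sum_split_zero _ (q ^ (m*k)) (q ^ (m*(k-1)))]
    · rw [← Nat.card_eq_fintype_card, hcardV]
    · exact hcount_u0
    · intro u hu
      exact hcount_u (u : ↥C →ₗ[L] L) (fun h => hu (Submodule.coe_eq_zero.mp h))
  have hRHS : ∑ v : ↥C, Nat.card {u : ↥V // (u : ↥C →ₗ[L] L) v = 0}
      = q ^ a + (q ^ (m*k) - 1) * q ^ b := by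
    rw [sum_split_zero _ (q ^ a) (q ^ b)]
    · rw [← Nat.card_eq_fintype_card, hcardC]
    · exact hcount_v0
    · exact hcount_v
  rw [hLHS, hRHS] at hdc
  obtain ⟨haeq, hdeq⟩ := arith_core q m k d a b hq2 hm1 hk2 hd1 hdm hab hdc
  refine ⟨?_, hdeq⟩
  rw [finrank_sup_rkSupport, ← hVdef, ← hadef, haeq, Nat.mul_comm]
end

section
/- Let C be a minimal [n,k]_{q^m/q} rank-metric code with k ≥ 2. Then n ≥ k + m - 1. -/
open Module Submodule

noncomputable def Tmap (K : Type) {L : Type} [Field K] [Field L] [Algebra K L] {n : ℕ}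
    (v : Fin n → L) : (Fin n → K) →ₗ[K] L where
  toFun μ := ∑ i, μ i • v i
  map_add' μ ν := by simp [add_smul, Finset.sum_add_distrib]
  map_smul' a μ := by simp [smul_smul, Finset.smul_sum]
variable {K L : Type} [Field K] [Field L] [Algebra K L] {n : ℕ}
lemma Tmap_apply (v : Fin n → L) (μ : Fin n → K) : Tmap K v μ = ∑ i, μ i • v i := rfl
lemma Tmap_single (v : Fin n → L) (i : Fin n) : Tmap K v (Pi.single i 1) = v i := by
  rw [Tmap_apply, Finset.sum_eq_single i]
  · simp
  · intro j _ hj; simp [Pi.single_apply, hj]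
  · simp
lemma mem_rkSupport_iff {v : Fin n → L} {ξ : Fin n → K} :
    ξ ∈ rkSupport K v ↔ ∃ φ : Module.Dual K L, ∀ i, φ (v i) = ξ i := by
  constructor
  · rintro ⟨φ, rfl⟩
    exact ⟨φ, fun i => by simp [rkSupport, LinearMap.pi_apply]⟩
  · rintro ⟨φ, hφ⟩
    exact ⟨φ, funext fun i => by simpa [rkSupport, LinearMap.pi_apply] using hφ i⟩

lemma rkSupport_le_of_ker_le {v v' : Fin n → L}
    (h : LinearMap.ker (Tmap K v) ≤ LinearMap.ker (Tmap K v')) :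
    rkSupport K v' ≤ rkSupport K v := by
  intro ξ hξ
  rw [mem_rkSupport_iff] at hξ ⊢
  obtain ⟨φ, hφ⟩ := hξ
  -- build ψ
  obtain ⟨q', hcompl⟩ := Submodule.exists_isCompl (LinearMap.range (Tmap K v))
  let π := Submodule.linearProjOfIsCompl _ q' hcompl
  let e := LinearMap.quotKerEquivRange (Tmap K v)
  let g := (Submodule.liftQ (LinearMap.ker (Tmap K v)) (Tmap K v') h) ∘ₗ
      (e.symm : LinearMap.range (Tmap K v) →ₗ[K] _)
  refine ⟨φ ∘ₗ g ∘ₗ π, fun i => ?_⟩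
  have hvi : v i ∈ LinearMap.range (Tmap K v) := ⟨Pi.single i 1, Tmap_single v i⟩
  have hπ : π (v i) = ⟨v i, hvi⟩ := Submodule.linearProjOfIsCompl_apply_left hcompl ⟨v i, hvi⟩
  have hsymm : e.symm ⟨v i, hvi⟩ = Submodule.Quotient.mk (Pi.single i 1) := by
    rw [LinearEquiv.symm_apply_eq]
    ext
    simp [e, LinearMap.quotKerEquivRange_apply_mk, Tmap_single]
  have : g (π (v i)) = Tmap K v' (Pi.single i 1) := by
    rw [hπ]
    show (Submodule.liftQ _ _ h) (e.symm ⟨v i, hvi⟩) = _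
    rw [hsymm, Submodule.liftQ_apply]
  simp only [LinearMap.comp_apply]
  rw [this, Tmap_single, hφ]

/-- inclusion of K^n into L^n -/
noncomputable def iotaFun (K L : Type) [Field K] [Field L] [Algebra K L] {n : ℕ}
    (u : Fin n → K) : Fin n → L := fun i => algebraMap K L (u i)

lemma rkSupport_iota_le (S : Submodule K (Fin n → K)) {u : Fin n → K} (hu : u ∈ S) :
    rkSupport K (iotaFun K L u) ≤ S := by
  rintro ξ hξ
  rw [mem_rkSupport_iff] at hξ
  obtain ⟨φ, hφ⟩ := hξ
  have : ξ = φ 1 • u := by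
    funext i
    rw [← hφ i]
    show φ (algebraMap K L (u i)) = φ 1 * u i
    rw [Algebra.algebraMap_eq_smul_one, map_smul, mul_comm]
    rfl
  rw [this]
  exact S.smul_mem _ hu

lemma rkSupport_add_le (a b : Fin n → L) :
    rkSupport K (a + b) ≤ rkSupport K a ⊔ rkSupport K b := by
  rintro ξ hξ
  rw [mem_rkSupport_iff] at hξ
  obtain ⟨φ, hφ⟩ := hξ
  have : ξ = (fun i => φ (a i)) + fun i => φ (b i) := by
    funext i; rw [← hφ i]; show φ (a i + b i) = _; rw [map_add]; rfl
  rw [this]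
  exact Submodule.add_mem_sup (mem_rkSupport_iff.mpr ⟨φ, fun _ => rfl⟩)
    (mem_rkSupport_iff.mpr ⟨φ, fun _ => rfl⟩)

lemma rkSupport_smul_le (α : L) (a : Fin n → L) :
    rkSupport K (α • a) ≤ rkSupport K a := by
  rintro ξ hξ
  rw [mem_rkSupport_iff] at hξ
  obtain ⟨φ, hφ⟩ := hξ
  rw [mem_rkSupport_iff]
  refine ⟨φ ∘ₗ (LinearMap.mulLeft K α), fun i => ?_⟩
  rw [← hφ i]
  simp [LinearMap.mulLeft_apply]

lemma rkSupport_zero_le (S : Submodule K (Fin n → K)) : rkSupport K (0 : Fin n → L) ≤ S := by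
  rintro ξ hξ
  rw [mem_rkSupport_iff] at hξ
  obtain ⟨φ, hφ⟩ := hξ
  have : ξ = 0 := by funext i; rw [← hφ i]; simp
  rw [this]; exact S.zero_mem

lemma rkSupport_le_of_mem_span {S : Submodule K (Fin n → K)} {c : Fin n → L}
    (hc : c ∈ Submodule.span L (iotaFun K L '' (S : Set (Fin n → K)))) :
    rkSupport K c ≤ S := by
  induction hc using Submodule.span_induction with
  | mem x hx =>
      obtain ⟨u, hu, rfl⟩ := hx
      exact rkSupport_iota_le S hu
  | zero => exact rkSupport_zero_le S
  | add x y _ _ hx hy => exact le_trans (rkSupport_add_le x y) (sup_le hx hy)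
  | smul α x _ hx => exact le_trans (rkSupport_smul_le α x) hx

lemma linearIndependent_iota {d : ℕ} {u : Fin d → Fin n → K} (hu : LinearIndependent K u) :
    LinearIndependent L (fun j => iotaFun K L (u j)) := by
  classical
  -- the matrix with columns u j
  let N : Matrix (Fin n) (Fin d) K := Matrix.of fun i j => u j i
  let f : (Fin d → K) →ₗ[K] (Fin n → K) := N.mulVecLin
  have hf : ∀ μ, f μ = ∑ j, μ j • u j := by
    intro μ
    funext i
    simp only [f, Matrix.mulVecLin_apply, Matrix.mulVec, dotProduct, N, Matrix.of_apply]
    rw [Finset.sum_apply]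
    congr 1; funext j; rw [Pi.smul_apply, smul_eq_mul, mul_comm]
  have hker : LinearMap.ker f = ⊥ := by
    rw [LinearMap.ker_eq_bot']
    intro μ hμ
    rw [hf] at hμ
    funext j
    exact Fintype.linearIndependent_iff.mp hu μ hμ j
  obtain ⟨g, hg⟩ := f.exists_leftInverse_of_injective hker
  let M : Matrix (Fin d) (Fin n) K := LinearMap.toMatrix' g
  let G : (Fin n → L) →ₗ[L] (Fin d → L) := (M.map (algebraMap K L)).mulVecLin
  have hGi : ∀ j, G (iotaFun K L (u j)) = iotaFun K L (Pi.single j 1) := by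
    intro j
    have hgu : g (u j) = Pi.single j 1 := by
      have : u j = f (Pi.single j 1) := by
        rw [hf]
        rw [Finset.sum_eq_single j]
        · simp
        · intro b _ hb; simp [Pi.single_apply, hb]
        · simp
      rw [this, ← LinearMap.comp_apply, hg]; rfl
    funext t
    simp only [G, Matrix.mulVecLin_apply, Matrix.mulVec, dotProduct, Matrix.map_apply]
    have : ∀ x, (algebraMap K L) (M t x) * iotaFun K L (u j) x
        = algebraMap K L (M t x * u j x) := by
      intro x; rw [map_mul]; rfl
    rw [Finset.sum_congr rfl fun x _ => this x, ← map_sum]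
    have hMv : ∑ x, M t x * u j x = (M.mulVec (u j)) t := rfl
    rw [hMv]
    have : M.mulVec (u j) = g (u j) := by
      have := Matrix.toLin'_toMatrix' g
      conv_rhs => rw [← this]
      rw [Matrix.toLin'_apply]
    rw [this, hgu]
    rfl
  -- conclude independence
  rw [Fintype.linearIndependent_iff]
  intro α hα
  have hGα : G (∑ j, α j • iotaFun K L (u j)) = 0 := by rw [hα, map_zero]
  rw [map_sum] at hGα
  simp only [map_smul, hGi] at hGα
  intro j
  have := congrFun hGα j
  rw [Finset.sum_apply] at this
  rw [Finset.sum_eq_single j] at this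
  · simpa [iotaFun] using this
  · intro b _ hb
    simp [iotaFun, Pi.single_apply, hb]
  · simp

lemma step1 {C : Submodule L (Fin n → L)}
    (hmin : ∀ v ∈ C, ∀ v' ∈ C, rkSupport K v' ≤ rkSupport K v → ∃ α : L, v' = α • v)
    {v : Fin n → L} (hv : v ∈ C) (hv0 : v ≠ 0) :
    finrank K (rkSupport K v) + finrank L C ≤ n + 1 := by
  classical
  set S := rkSupport K v with hS
  set V := Submodule.span L (iotaFun K L '' (S : Set (Fin n → K))) with hV
  -- (a) dimension of V is at least finrank K S
  have hVS : finrank K S ≤ finrank L V := by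
    let b := Module.finBasis K S
    have hb : LinearIndependent K (fun j => (b j : Fin n → K)) :=
      b.linearIndependent.map' S.subtype S.ker_subtype
    have hw : LinearIndependent L (fun j => iotaFun K L (b j : Fin n → K)) :=
      linearIndependent_iota hb
    have hmem : ∀ j, iotaFun K L (b j : Fin n → K) ∈ V := fun j =>
      Submodule.subset_span ⟨(b j : Fin n → K), (b j).2, rfl⟩
    let w' : Fin (finrank K S) → V := fun j => ⟨iotaFun K L (b j : Fin n → K), hmem j⟩
    have hw' : LinearIndependent L w' := hw.of_comp V.subtype
    simpa using hw'.fintype_card_le_finrank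
  -- minimality: V ⊓ C is contained in the line through v
  have hVC : V ⊓ C ≤ Submodule.span L {v} := by
    rintro c ⟨hcV, hcC⟩
    obtain ⟨α, hα⟩ := hmin v hv c hcC (rkSupport_le_of_mem_span hcV)
    rw [Submodule.mem_span_singleton]
    exact ⟨α, hα.symm⟩
  have h1 : finrank L ↥(V ⊓ C) ≤ 1 := by
    refine le_trans (Submodule.finrank_mono hVC) ?_
    rw [finrank_span_singleton hv0]
  have h2 : finrank L ↥(V ⊔ C) + finrank L ↥(V ⊓ C) = finrank L V + finrank L C :=
    Submodule.finrank_sup_add_finrank_inf_eq V C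
  have h3 : finrank L ↥(V ⊔ C) ≤ n := by
    have := Submodule.finrank_le (V ⊔ C)
    rwa [Module.finrank_fin_fun] at this
  omega

lemma weight_of_surjective [FiniteDimensional K L] {v : Fin n → L}
    (hsurj : Function.Surjective (Tmap K v)) :
    finrank K (rkSupport K v) = finrank K L := by
  classical
  set P := LinearMap.pi (fun i => LinearMap.applyₗ (v i) : Fin n → Module.Dual K L →ₗ[K] K)
    with hP
  have hker : LinearMap.ker P = ⊥ := by
    rw [LinearMap.ker_eq_bot']
    intro φ hφ
    have hφi : ∀ i, φ (v i) = 0 := by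
      intro i
      have := congrFun hφ i
      simpa [hP, LinearMap.pi_apply] using this
    ext z
    obtain ⟨μ, rfl⟩ := hsurj z
    rw [Tmap_apply, map_sum]
    simp [map_smul, hφi]
  have := LinearMap.finrank_range_add_finrank_ker P
  rw [hker, finrank_bot, add_zero, Subspace.dual_finrank_eq] at this
  exact this

/-- The pairing with `x` as a `K`-linear map. -/
noncomputable def pare (K : Type) {L : Type} [Field K] [Field L] [Algebra K L]
    (x : L × L) : (L × L) →ₗ[K] L where
  toFun w := x.1 * w.1 + x.2 * w.2
  map_add' w w' := by simp [mul_add]; ring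
  map_smul' a w := by simp [smul_add, mul_smul_comm]

lemma pare_apply (x w : L × L) : pare K x w = x.1 * w.1 + x.2 * w.2 := rfl

lemma step2 [Fintype K] [Fintype L] {C : Submodule L (Fin n → L)} (hk2 : 2 ≤ finrank L C)
    (hmin : ∀ v ∈ C, ∀ v' ∈ C, rkSupport K v' ≤ rkSupport K v → ∃ α : L, v' = α • v) :
    ∃ v ∈ C, v ≠ 0 ∧ Function.Surjective (Tmap K v) := by
  classical
  haveI : FiniteDimensional K L := Module.Finite.of_finite
  by_contra hcon
  push_neg at hcon
  -- two independent codewords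
  let b := Module.finBasis L C
  let w2 : Fin 2 → (Fin n → L) := fun i => (b (Fin.castLE hk2 i) : Fin n → L)
  have hw2 : LinearIndependent L w2 :=
    (b.linearIndependent.comp (Fin.castLE hk2) (Fin.castLE_injective hk2)).map'
      C.subtype C.ker_subtype
  set u : Fin n → L := w2 0 with hu_def
  set v : Fin n → L := w2 1 with hv_def
  have hu : u ∈ C := (b (Fin.castLE hk2 0)).2
  have hv : v ∈ C := (b (Fin.castLE hk2 1)).2
  have hpair : ∀ a c : L, a • u + c • v = 0 → a = 0 ∧ c = 0 := by
    intro a c h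
    have := Fintype.linearIndependent_iff.mp hw2 ![a, c]
    have h' : ∑ i, (![a, c] i) • w2 i = 0 := by
      rw [Fin.sum_univ_two]
      simpa using h
    exact ⟨this h' 0, this h' 1⟩
  -- the projection map and its range
  set Φ : (Fin n → K) →ₗ[K] (L × L) := (Tmap K u).prod (Tmap K v) with hΦ
  set U : Submodule K (L × L) := LinearMap.range Φ with hU
  set cx : L × L → (Fin n → L) := fun x => x.1 • u + x.2 • v with hcx
  have key : ∀ x : L × L, (pare K x) ∘ₗ Φ = Tmap K (cx x) := by
    intro x
    ext μ
    simp only [LinearMap.comp_apply, hΦ, LinearMap.prod_apply, Function.prod, pare_apply,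
      Tmap_apply, hcx]
    rw [Finset.mul_sum, Finset.mul_sum, ← Finset.sum_add_distrib]
    congr 1
    funext i
    simp only [Pi.add_apply, Pi.smul_apply, smul_eq_mul]
    rw [smul_add, mul_smul_comm, mul_smul_comm]
  have hcxC : ∀ x : L × L, cx x ∈ C := fun x => C.add_mem (C.smul_mem _ hu) (C.smul_mem _ hv)
  have hcx0 : ∀ x : L × L, x ≠ 0 → cx x ≠ 0 := by
    intro x hx h0
    obtain ⟨h1, h2⟩ := hpair _ _ h0
    exact hx (Prod.ext h1 h2)
  -- blocking
  have hblock : ∀ x : L × L, x ≠ 0 → ∃ w, w ∈ U ∧ w ≠ 0 ∧ pare K x w = 0 := by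
    intro x hx
    by_contra hno
    push_neg at hno
    -- choose y
    obtain ⟨y, hy⟩ : ∃ y : L × L, (cx y = u ∧ x.2 ≠ 0) ∨ (cx y = v ∧ x.2 = 0 ∧ x.1 ≠ 0) :=
      by
      rcases eq_or_ne x.2 0 with h2 | h2
      · refine ⟨(0, 1), ?_⟩
        right
        refine ⟨by simp [hcx], h2, fun h1 => hx (Prod.ext h1 h2)⟩
      · exact ⟨(1, 0), Or.inl ⟨by simp [hcx], h2⟩⟩
    have hker : LinearMap.ker (Tmap K (cx x)) ≤ LinearMap.ker (Tmap K (cx y)) := by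
      intro μ hμ
      rw [LinearMap.mem_ker] at hμ ⊢
      have h1 : pare K x (Φ μ) = 0 := by
        rw [← LinearMap.comp_apply, key x]; exact hμ
      have h2 : Φ μ = 0 := by
        by_contra hne
        exact hno (Φ μ) ⟨μ, rfl⟩ hne h1
      rw [← key y, LinearMap.comp_apply, h2, map_zero]
    have hσ := rkSupport_le_of_ker_le hker
    obtain ⟨α, hα⟩ := hmin (cx x) (hcxC x) (cx y) (hcxC y) hσ
    have hexp : cx y = (α * x.1) • u + (α * x.2) • v := by
      rw [hα]
      show α • (x.1 • u + x.2 • v) = _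
      rw [smul_add, smul_smul, smul_smul]
    rcases hy with ⟨hcyu, h2⟩ | ⟨hcyv, h2, h1⟩
    · rw [hcyu] at hexp
      have heq : (α * x.1 - 1) • u + (α * x.2) • v = 0 := by
        have h' : (α * x.1 - 1) • u + (α * x.2) • v
            = ((α * x.1) • u + (α * x.2) • v) - u := by module
        rw [h', ← hexp, sub_self]
      obtain ⟨e1, e2⟩ := hpair _ _ heq
      have hα0 : α ≠ 0 := by
        intro h; rw [h, zero_mul] at e1; simpa using e1
      rcases mul_eq_zero.mp e2 with h | h
      · exact hα0 h
      · exact h2 h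
    · rw [hcyv] at hexp
      rw [h2, mul_zero, zero_smul, add_zero] at hexp
      have heq : (α * x.1) • u + (-1 : L) • v = 0 := by
        rw [neg_one_smul, ← hexp]
        simp
      obtain ⟨e1, e2⟩ := hpair _ _ heq
      norm_num at e2
  -- dimension bookkeeping
  set m' := finrank K L with hm'
  set d := finrank K U with hd
  have hdim : ∀ x : L × L, x ≠ 0 →
      1 ≤ finrank K ↥(U ⊓ LinearMap.ker (pare K x)) ∧
      d + 1 ≤ finrank K ↥(U ⊓ LinearMap.ker (pare K x)) + m' := by
    intro x hx
    set P := U ⊓ LinearMap.ker (pare K x) with hPdef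
    have hrn : finrank K ↥(LinearMap.range (Tmap K (cx x))) + finrank K ↥P = d := by
      have h1 := LinearMap.finrank_range_add_finrank_ker ((pare K x).domRestrict U)
      have hr : LinearMap.range ((pare K x).domRestrict U)
          = LinearMap.range (Tmap K (cx x)) := by
        rw [LinearMap.range_domRestrict, hU, ← LinearMap.range_comp, key x]
      have hkq : finrank K ↥(LinearMap.ker ((pare K x).domRestrict U)) = finrank K ↥P := by
        rw [LinearMap.ker_domRestrict]
        have he : Submodule.comap U.subtype (LinearMap.ker (pare K x))
            = Submodule.comap U.subtype P := by
          ext ⟨w, hw⟩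
          simp [hPdef, hw]
        rw [he]
        exact (Submodule.comapSubtypeEquivOfLe inf_le_left).finrank_eq
      rw [hr, hkq] at h1
      exact h1
    have h1le : 1 ≤ finrank K ↥P := by
      obtain ⟨w, hwU, hw0, hwk⟩ := hblock x hx
      rcases Nat.eq_zero_or_pos (finrank K ↥P) with h | h
      · rw [Submodule.finrank_eq_zero] at h
        have hwP : w ∈ P := Submodule.mem_inf.mpr ⟨hwU, LinearMap.mem_ker.mpr hwk⟩
        rw [h] at hwP
        exact absurd (Submodule.mem_bot K |>.mp hwP) hw0
      · exact h
    have hwlt : finrank K ↥(LinearMap.range (Tmap K (cx x))) < m' := by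
      have hne : LinearMap.range (Tmap K (cx x)) < ⊤ := by
        rcases lt_or_eq_of_le (le_top : LinearMap.range (Tmap K (cx x)) ≤ ⊤) with h | h
        · exact h
        · exact absurd (LinearMap.range_eq_top.mp h) (hcon (cx x) (hcxC x) (hcx0 x hx))
      exact Submodule.finrank_lt hne.ne
    exact ⟨h1le, by omega⟩
  -- counting
  set q := Fintype.card K with hq
  have hq2 : 2 ≤ q := Fintype.one_lt_card
  have hcardL : Fintype.card L = q ^ m' := card_eq_pow_finrank (K := K)
  let pt : Option L → L × L := fun t => t.elim (1, 0) (fun s => (s, 1))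
  have hpt0 : ∀ t, pt t ≠ 0 := by
    rintro (_ | s) h
    · exact one_ne_zero (congrArg Prod.fst h)
    · exact one_ne_zero (congrArg Prod.snd h)
  have hptdisj : ∀ t s, t ≠ s → ∀ w : L × L,
      pare K (pt t) w = 0 → pare K (pt s) w = 0 → w = 0 := by
    have key2 : ∀ (a b : L) (w : L × L), a ≠ b →
        pare K (a, 1) w = 0 → pare K (b, 1) w = 0 → w = 0 := by
      intro a b w hab h1 h2
      rw [pare_apply] at h1 h2
      simp only at h1 h2
      have hw1 : (a - b) * w.1 = 0 := by ring_nf; linear_combination h1 - h2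
      have hw1' : w.1 = 0 := by
        rcases mul_eq_zero.mp hw1 with h | h
        · exact absurd (sub_eq_zero.mp h) hab
        · exact h
      have hw2' : w.2 = 0 := by
        rw [hw1', mul_zero, zero_add, one_mul] at h1
        exact h1
      exact Prod.ext hw1' hw2'
    have keyinf : ∀ (a : L) (w : L × L),
        pare K (1, 0) w = 0 → pare K (a, 1) w = 0 → w = 0 := by
      intro a w h1 h2
      rw [pare_apply] at h1 h2
      simp only at h1 h2
      have hw1' : w.1 = 0 := by linear_combination h1
      have hw2' : w.2 = 0 := by
        rw [hw1', mul_zero, zero_add, one_mul] at h2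
        exact h2
      exact Prod.ext hw1' hw2'
    rintro (_ | a) (_ | b) hts w h1 h2
    · exact absurd rfl hts
    · exact keyinf b w h1 h2
    · exact keyinf a w h2 h1
    · exact key2 a b w (fun h => hts (by rw [h])) h1 h2
  -- Finset counting
  let A : Option L → Finset (L × L) := fun t =>
    (Finset.univ.filter (· ∈ U ⊓ LinearMap.ker (pare K (pt t)))).erase 0
  have hA1 : ∀ t, (0 : L × L) ∈ Finset.univ.filter (· ∈ U ⊓ LinearMap.ker (pare K (pt t))) :=
    fun t => Finset.mem_filter.mpr ⟨Finset.mem_univ _, Submodule.zero_mem _⟩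
  have hAcard : ∀ t, (A t).card + 1 = q ^ finrank K ↥(U ⊓ LinearMap.ker (pare K (pt t))) := by
    intro t
    have h1 : (A t).card
        = (Finset.univ.filter (· ∈ U ⊓ LinearMap.ker (pare K (pt t)))).card - 1 :=
      Finset.card_erase_of_mem (hA1 t)
    have h2 : (Finset.univ.filter (· ∈ U ⊓ LinearMap.ker (pare K (pt t)))).card
        = Fintype.card ↥(U ⊓ LinearMap.ker (pare K (pt t))) := by
      rw [← Fintype.card_subtype]
      all_goals congr!
    have h3 : Fintype.card ↥(U ⊓ LinearMap.ker (pare K (pt t)))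
        = q ^ finrank K ↥(U ⊓ LinearMap.ker (pare K (pt t))) := card_eq_pow_finrank (K := K)
    have h0 : 1 ≤ (Finset.univ.filter (· ∈ U ⊓ LinearMap.ker (pare K (pt t)))).card :=
      Finset.card_pos.mpr ⟨0, hA1 t⟩
    omega
  have hdisjA : ∀ t ∈ (Finset.univ : Finset (Option L)), ∀ s ∈ Finset.univ, t ≠ s →
      Disjoint (A t) (A s) := by
    intro t _ s _ hts
    rw [Finset.disjoint_left]
    intro w hwt hws
    have h1 := Finset.mem_erase.mp hwt
    have h2 := Finset.mem_erase.mp hws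
    have hwt' := (Finset.mem_filter.mp h1.2).2
    have hws' := (Finset.mem_filter.mp h2.2).2
    exact h1.1 (hptdisj t s hts w (LinearMap.mem_ker.mp hwt'.2) (LinearMap.mem_ker.mp hws'.2))
  let B : Finset (L × L) := (Finset.univ.filter (· ∈ U)).erase 0
  have hBcard : B.card + 1 = q ^ d := by
    have hB1 : (0 : L × L) ∈ Finset.univ.filter (· ∈ U) :=
      Finset.mem_filter.mpr ⟨Finset.mem_univ _, Submodule.zero_mem _⟩
    have h1 : B.card = (Finset.univ.filter (· ∈ U)).card - 1 := Finset.card_erase_of_mem hB1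
    have h2 : (Finset.univ.filter (· ∈ U)).card = Fintype.card ↥U := by
      rw [← Fintype.card_subtype]
      all_goals congr!
    have h3 : Fintype.card ↥U = q ^ finrank K ↥U := card_eq_pow_finrank (K := K)
    have h0 : 1 ≤ (Finset.univ.filter (· ∈ U)).card := Finset.card_pos.mpr ⟨0, hB1⟩
    rw [← hd] at h3
    omega
  have hsub : (Finset.univ.biUnion A) ⊆ B := by
    intro w hw
    obtain ⟨t, _, hwt⟩ := Finset.mem_biUnion.mp hw
    have h1 := Finset.mem_erase.mp hwt
    have hw' := (Finset.mem_filter.mp h1.2).2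
    exact Finset.mem_erase.mpr ⟨h1.1, Finset.mem_filter.mpr ⟨Finset.mem_univ _, hw'.1⟩⟩
  have hsum : ∑ t : Option L, (A t).card ≤ B.card := by
    rw [← Finset.card_biUnion hdisjA]
    exact Finset.card_le_card hsub
  set e := max 1 (d + 1 - m') with he
  have hAe : ∀ t : Option L, q ^ e ≤ (A t).card + 1 := by
    intro t
    rw [hAcard t]
    apply Nat.pow_le_pow_right (by omega)
    obtain ⟨h1, h2⟩ := hdim (pt t) (hpt0 t)
    omega
  have hcardO : Fintype.card (Option L) = q ^ m' + 1 := by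
    rw [Fintype.card_option, hcardL]
  have hmaster : (q ^ m' + 1) * q ^ e ≤ q ^ d + q ^ m' := by
    have h2 : (q ^ m' + 1) * q ^ e ≤ ∑ t : Option L, ((A t).card + 1) := by
      have := Finset.sum_le_sum (fun t (_ : t ∈ Finset.univ) => hAe t)
      rw [Finset.sum_const, Finset.card_univ, smul_eq_mul, hcardO] at this
      exact this
    have h1 : ∑ t : Option L, ((A t).card + 1)
        = (∑ t : Option L, (A t).card) + (q ^ m' + 1) := by
      rw [Finset.sum_add_distrib, Finset.sum_const, Finset.card_univ, smul_eq_mul,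
        hcardO, mul_one]
    omega
  -- final numeric contradiction
  have hq1 : 1 ≤ q := by omega
  rcases le_or_gt d m' with hdm | hdm
  · have hqe : q ≤ q ^ e := by
      calc q = q ^ 1 := (pow_one q).symm
      _ ≤ q ^ e := Nat.pow_le_pow_right hq1 (le_max_left _ _)
    have hdle : q ^ d ≤ q ^ m' := Nat.pow_le_pow_right hq1 hdm
    have hchain : (q ^ m' + 1) * q ≤ q ^ d + q ^ m' :=
      le_trans (Nat.mul_le_mul_left _ hqe) hmaster
    have h4 : (q ^ m' + 1) * 2 ≤ (q ^ m' + 1) * q := Nat.mul_le_mul_left _ hq2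
    obtain ⟨Z, hZ⟩ : ∃ Z, (q ^ m' + 1) * q = Z := ⟨_, rfl⟩
    rw [hZ] at hchain h4
    omega
  · have he2 : e = d + 1 - m' := max_eq_right (by omega)
    have hme : m' + e = d + 1 := by omega
    have hXE : q ^ m' * q ^ e = q ^ d * q := by rw [← pow_add, hme, pow_succ]
    have hexp : (q ^ m' + 1) * q ^ e = q ^ d * q + q ^ e := by
      rw [add_mul, one_mul, hXE]
    rw [hexp] at hmaster
    have hdle : q ^ m' ≤ q ^ d := Nat.pow_le_pow_right hq1 (by omega)
    have hqe1 : 1 ≤ q ^ e := Nat.one_le_pow _ _ (by omega)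
    have h4 : q ^ d * 2 ≤ q ^ d * q := Nat.mul_le_mul_left _ hq2
    obtain ⟨Z, hZ⟩ : ∃ Z, q ^ d * q = Z := ⟨_, rfl⟩
    rw [hZ] at hmaster h4
    omega

theorem stmt_16 {K L : Type} [Field K] [Field L] [Algebra K L] [Fintype K] [Fintype L]
    {n k m : ℕ} (hm : Module.finrank K L = m)
    (C : Submodule L (Fin n → L)) (hk : Module.finrank L C = k) (hk2 : 2 ≤ k)
    (hmin : ∀ v ∈ C, ∀ v' ∈ C, rkSupport K v' ≤ rkSupport K v → ∃ α : L, v' = α • v) :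
    k + m - 1 ≤ n := by
  classical
  haveI : FiniteDimensional K L := Module.Finite.of_finite
  obtain ⟨v, hv, hv0, hsurj⟩ := step2 (hk ▸ hk2) hmin
  have h1 := step1 hmin hv hv0
  rw [weight_of_surjective hsurj, hm, hk] at h1
  omega
end
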